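/- Let G be a finite simple chordal graph, i.e., a graph with no induced cycle of length four or more. Then κ*(G) + 1 = δ*(G) + 1 = ω(G), where κ* is the subgraph connectivity number, δ* is the degeneracy number, and ω(G) is the clique number of G; consequently the Gaussian rank of G satisfies r(G) = ω(G). -/

import Mathlib

open Matrix MeasureTheory

/-- Two matrices match on a graph `G`: equal diagonals and equal entries on all edges. -/
def MatchOn {V : Type*} (G : SimpleGraph V) (A B : Matrix V V ℝ) : Prop :=
  (∀ i, A i i = B i i) ∧ ∀ i j, G.Adj i j → A i j = B i j

/-- A real symmetric positive semidefinite matrix of rank `d` is in general position if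
every `d × d` principal submatrix is nonsingular. -/
def InGenPos {V : Type*} [Fintype V] [DecidableEq V] (A : Matrix V V ℝ) (d : ℕ) : Prop :=
  A.PosSemidef ∧ A.rank = d ∧
    ∀ α : Finset V, α.card = d →
      (A.submatrix (fun i : α => (i : V)) (fun i : α => (i : V))).det ≠ 0

/-- The defining property of the Gaussian rank at level `r`. -/
def GRankProp {V : Type*} [Fintype V] [DecidableEq V] (G : SimpleGraph V) (r : ℕ) : Prop :=
  ∀ A : Matrix V V ℝ, InGenPos A r → ∃ P : Matrix V V ℝ, P.PosDef ∧ MatchOn G P A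

/-- The Gaussian rank of a graph. -/
noncomputable def gaussianRank {V : Type*} [Fintype V] [DecidableEq V]
    (G : SimpleGraph V) : ℕ :=
  sInf {r : ℕ | 0 < r ∧ GRankProp G r}

/-- Vertex connectivity: the least size of a vertex set whose deletion disconnects the
graph or leaves at most one vertex. -/
noncomputable def vertexConn {V : Type*} (G : SimpleGraph V) : ℕ :=
  sInf {k : ℕ | ∃ S : Set V, S.ncard = k ∧
    (¬ (G.induce Sᶜ).Connected ∨ Sᶜ.ncard ≤ 1)}

/-- Subgraph connectivity number: the maximum vertex connectivity over all subgraphs. -/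
noncomputable def subgraphConn {V : Type*} (G : SimpleGraph V) : ℕ :=
  sSup {k : ℕ | ∃ H : G.Subgraph, vertexConn H.coe = k}

/-- Minimum degree of a graph. -/
noncomputable def minDeg {V : Type*} (G : SimpleGraph V) : ℕ :=
  sInf {k : ℕ | ∃ v, (G.neighborSet v).ncard = k}

/-- Degeneracy number: the maximum over all subgraphs of the minimum degree. -/
noncomputable def degeneracy {V : Type*} (G : SimpleGraph V) : ℕ :=
  sSup {k : ℕ | ∃ H : G.Subgraph, minDeg H.coe = k}

namespace GR19
open Matrix
set_option linter.unusedSectionVars false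

variable {V : Type*} [Fintype V] [DecidableEq V]

/-- Positive-definiteness of the quadratic form of `A` restricted to vectors supported on `s`. -/
def PDOn (A : Matrix V V ℝ) (s : Set V) : Prop :=
  ∀ x : V → ℝ, x ≠ 0 → (∀ i, i ∉ s → x i = 0) → 0 < x ⬝ᵥ (A *ᵥ x)

lemma PDOn.mono {A : Matrix V V ℝ} {s t : Set V} (h : PDOn A t) (hst : s ⊆ t) : PDOn A s :=
  fun x hx hsupp => h x hx (fun i hi => hsupp i (fun hmem => hi (hst hmem)))

lemma sum_supported {s : Finset V} (g : V → ℝ) (hg : ∀ i ∉ s, g i = 0) :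
    ∑ i, g i = ∑ i : s, g ↑i := by
  rw [Finset.sum_coe_sort s g]
  exact (Finset.sum_subset (Finset.subset_univ s) (fun x _ hx => hg x hx)).symm

lemma quad_restrict (A : Matrix V V ℝ) {s : Finset V} (x : V → ℝ) (hx : ∀ i ∉ s, x i = 0) :
    x ⬝ᵥ (A *ᵥ x) =
      (fun i : s => x ↑i) ⬝ᵥ ((A.submatrix ((↑·) : s → V) ((↑·) : s → V)) *ᵥ
        (fun i : s => x ↑i)) := by
  have inner : ∀ i, (A *ᵥ x) i = ∑ j : s, A i ↑j * x ↑j := fun i =>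
    sum_supported (fun j => A i j * x j) (fun j hj => by simp [hx j hj])
  calc x ⬝ᵥ (A *ᵥ x) = ∑ i, x i * (A *ᵥ x) i := rfl
    _ = ∑ i : s, x ↑i * (A *ᵥ x) ↑i :=
        sum_supported (fun i => x i * (A *ᵥ x) i) (fun i hi => by simp [hx i hi])
    _ = ∑ i : s, x ↑i * ∑ j : s, A ↑i ↑j * x ↑j := by simp only [inner]
    _ = _ := by simp [dotProduct, mulVec, submatrix]

lemma posDef_submatrix_of_PDOn {A : Matrix V V ℝ} (hH : A.IsHermitian) {s : Finset V}
    (h : PDOn A ↑s) : (A.submatrix ((↑·) : s → V) ((↑·) : s → V)).PosDef := by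
  refine PosDef.of_dotProduct_mulVec_pos (hH.submatrix _) fun y hy => ?_
  set x : V → ℝ := fun i => if hi : i ∈ s then y ⟨i, hi⟩ else 0 with hxdef
  have hx : ∀ i ∉ s, x i = 0 := fun i hi => dif_neg hi
  have hxy : (fun i : s => x ↑i) = y := funext fun i => by simp [hxdef]
  have hx0 : x ≠ 0 := by
    intro h0
    apply hy
    funext i
    have h1 : y i = x ↑i := (congrFun hxy i).symm
    rw [h1, h0]
    rfl
  have key := h x hx0 (by simpa using hx)
  rw [quad_restrict A x hx, hxy] at key
  simpa using key

lemma PDOn_of_posDef_submatrix {A : Matrix V V ℝ} {s : Finset V}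
    (h : (A.submatrix ((↑·) : s → V) ((↑·) : s → V)).PosDef) : PDOn A ↑s := by
  intro x hx hsupp
  have hsupp' : ∀ i ∉ s, x i = 0 := fun i hi => hsupp i (by simpa using hi)
  rw [quad_restrict A x hsupp']
  have hne : (fun i : s => x ↑i) ≠ 0 := by
    intro h0
    apply hx
    funext i
    by_cases hi : i ∈ s
    · exact congrFun h0 ⟨i, hi⟩
    · exact hsupp' i hi
  simpa using h.dotProduct_mulVec_pos hne

lemma PDOn.of_posDef {A : Matrix V V ℝ} (h : A.PosDef) (s : Set V) : PDOn A s :=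
  fun x hx _ => by simpa using h.dotProduct_mulVec_pos hx

lemma posDef_of_posSemidef_det {n : Type*} [Fintype n] [DecidableEq n] {A : Matrix n n ℝ}
    (h : A.PosSemidef) (hd : A.det ≠ 0) : A.PosDef := by
  refine PosDef.of_dotProduct_mulVec_pos h.1 fun x hx => ?_
  rcases lt_or_eq_of_le (h.dotProduct_mulVec_nonneg x) with h' | h'
  · simpa using h'
  · exfalso
    have h0 : star x ⬝ᵥ (A *ᵥ x) = 0 := h'.symm
    have hAx : A *ᵥ x = 0 := (h.dotProduct_mulVec_zero_iff x).mp h0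
    exact hd (Matrix.exists_mulVec_eq_zero_iff.mp ⟨x, hx, hAx⟩)

end GR19

namespace GR19
open Matrix

set_option linter.unusedSectionVars false
set_option maxHeartbeats 1000000

variable {V : Type*} [Fintype V] [DecidableEq V]

lemma extend_posdef (A P' : Matrix V V ℝ) (hP' : P'.PosDef) (v : V) (C : Finset V)
    (hvC : v ∉ C) (hPD : PDOn A ↑(insert v C)) (hAs : ∀ z y, A z y = A y z)
    (hmatch : ∀ z ∈ C, ∀ y ∈ C, P' z y = A z y) :
    ∃ P : Matrix V V ℝ, P.PosDef ∧ (∀ x y, x ≠ v → y ≠ v → P x y = P' x y) ∧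
      P v v = A v v ∧ (∀ y ∈ C, P v y = A v y) ∧ (∀ y ∈ C, P y v = A y v) := by
  classical
  set A_C : Matrix C C ℝ := A.submatrix ((↑·) : C → V) ((↑·) : C → V) with hACdef
  have hAH : A.IsHermitian := by
    ext i j; simp [conjTranspose_apply, hAs j i]
  have hP'sym : ∀ a b, P' a b = P' b a := by
    intro a b
    have := congrFun (congrFun hP'.1 b) a
    simpa [conjTranspose_apply] using this
  have hPDC : PDOn A ↑C := hPD.mono (by intro z hz; simp_all)
  have hACpd : A_C.PosDef := posDef_submatrix_of_PDOn hAH hPDC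
  have hACunit : IsUnit A_C.det := Matrix.isUnit_iff_isUnit_det A_C |>.mp hACpd.isUnit
  set c : C → ℝ := fun z => A ↑z v with hcdef
  set b₀ : C → ℝ := A_C⁻¹ *ᵥ c with hb0def
  set b : V → ℝ := fun z => if h : z ∈ C then b₀ ⟨z, h⟩ else 0 with hbdef
  have hb : ∀ z ∉ C, b z = 0 := fun z hz => dif_neg hz
  have hbv : b v = 0 := hb v hvC
  have hbc : ∀ z : C, b ↑z = b₀ z := fun z => by simp [hbdef]
  have hACb : A_C *ᵥ b₀ = c := by
    rw [hb0def, mulVec_mulVec, Matrix.mul_nonsing_inv _ hACunit, one_mulVec]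
  have key1 : ∀ y ∈ C, (∑ z, b z * P' z y) = A v y := by
    intro y hy
    have h1 : (∑ z, b z * P' z y) = ∑ z : C, b ↑z * P' ↑z y :=
      sum_supported _ (fun z hz => by simp [hb z hz])
    have h2 : ∀ z : C, b ↑z * P' ↑z y = A_C ⟨y, hy⟩ z * b₀ z := by
      intro z
      rw [hbc z, hmatch _ z.2 _ hy, hACdef]
      simp only [submatrix_apply]
      rw [hAs ↑z y, mul_comm]
    rw [h1]
    rw [Finset.sum_congr rfl (fun z _ => h2 z)]
    have h3 : (∑ z : C, A_C ⟨y, hy⟩ z * b₀ z) = (A_C *ᵥ b₀) ⟨y, hy⟩ := rfl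
    rw [h3, hACb, hcdef]
    exact (hAs y v)
  have hquadb : b ⬝ᵥ (P' *ᵥ b) = b₀ ⬝ᵥ c := by
    rw [quad_restrict P' b hb]
    have hsub : P'.submatrix ((↑·) : C → V) ((↑·) : C → V) = A_C := by
      ext z y; exact hmatch _ z.2 _ y.2
    have hfb : (fun i : C => b ↑i) = b₀ := funext hbc
    rw [hsub, hfb, hACb]
  set δ : ℝ := A v v - b₀ ⬝ᵥ c with hδdef
  have hδ : 0 < δ := by
    set xs : V → ℝ := Pi.single v 1 - b with hxsdef
    have hxssupp : ∀ i, i ∉ (↑(insert v C) : Set V) → xs i = 0 := by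
      intro i hi
      simp only [Finset.coe_insert, Set.mem_insert_iff, Finset.mem_coe] at hi
      push_neg at hi
      simp [hxsdef, Pi.single_eq_of_ne hi.1, hb i hi.2]
    have hxs0 : xs ≠ 0 := by
      intro h0
      have := congrFun h0 v
      simp [hxsdef, hbv] at this
    have hq := hPD xs hxs0 hxssupp
    have hT2 : (A *ᵥ b) v = b₀ ⬝ᵥ c := by
      have h2 : (∑ y, A v y * b y) = ∑ y : C, A v ↑y * b ↑y :=
        sum_supported _ (fun y hy => by simp [hb y hy])
      have h1 : (A *ᵥ b) v = ∑ y, A v y * b y := rfl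
      rw [h1, h2]
      simp only [dotProduct]
      refine Finset.sum_congr rfl fun y _ => ?_
      rw [hbc y, hcdef, hAs v ↑y, mul_comm]
    have hT3 : b ⬝ᵥ (A *ᵥ Pi.single v 1) = b₀ ⬝ᵥ c := by
      have h1 : ∀ z, (A *ᵥ Pi.single v 1) z = A z v := by
        intro z
        simp [mulVec, dotProduct, Pi.single_apply]
      have h2 : b ⬝ᵥ (A *ᵥ Pi.single v 1) = ∑ z, b z * A z v := by
        simp only [dotProduct, h1]
      rw [h2, sum_supported _ (fun z hz => by simp [hb z hz])]
      simp only [dotProduct]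
      exact Finset.sum_congr rfl fun z _ => by rw [hbc z, hcdef]
    have hT4 : b ⬝ᵥ (A *ᵥ b) = b₀ ⬝ᵥ c := by
      rw [quad_restrict A b hb]
      have hfb : (fun i : C => b ↑i) = b₀ := funext hbc
      rw [hfb]
      have h5 : A.submatrix ((↑·) : C → V) ((↑·) : C → V) = A_C := rfl
      rw [h5, hACb]
    have e1 : Pi.single v (1:ℝ) ⬝ᵥ (A *ᵥ Pi.single v 1) = A v v := by
      simp [mulVec, dotProduct, Pi.single_apply]
    have e2 : Pi.single v (1:ℝ) ⬝ᵥ (A *ᵥ b) = (A *ᵥ b) v := by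
      simp [dotProduct, Pi.single_apply]
    have hexp : xs ⬝ᵥ (A *ᵥ xs) = δ := by
      rw [hxsdef, sub_dotProduct, mulVec_sub, dotProduct_sub, dotProduct_sub,
        e1, e2, hT2, hT3, hT4, hδdef]
      ring
    rwa [hexp] at hq
  -- the bordering matrix N and diagonal correction
  set N : Matrix V V ℝ := Matrix.of (fun j k =>
      (if k = v then b j else 0) + (if j = k then (if k = v then 0 else 1) else 0)) with hNdef
  set dv : V → ℝ := fun z => if z = v then δ else 0 with hdvdef
  set P : Matrix V V ℝ := Nᵀ * P' * N + Matrix.diagonal dv with hPdef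
  have hNH : Nᴴ = Nᵀ := by ext i j; simp [conjTranspose_apply]
  have hNapp : ∀ j k, N j k =
      (if k = v then b j else 0) + (if j = k then (if k = v then 0 else 1) else 0) :=
    fun j k => rfl
  have hmulN : ∀ (M : Matrix V V ℝ) x y, (M * N) x y =
      if y = v then ∑ k, M x k * b k else M x y := by
    intro M x y
    rw [Matrix.mul_apply]
    by_cases hy : y = v
    · subst hy
      rw [if_pos rfl]
      refine Finset.sum_congr rfl fun k _ => ?_
      rw [hNapp]
      by_cases hk : k = y <;> simp [hk]
    · rw [if_neg hy]
      simp only [hNapp, if_neg hy]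
      simp [mul_ite, Finset.sum_ite_eq' Finset.univ y]
  have hNTmul : ∀ (M : Matrix V V ℝ) x y, (Nᵀ * M) x y =
      if x = v then ∑ j, b j * M j y else M x y := by
    intro M x y
    rw [Matrix.mul_apply]
    simp only [transpose_apply]
    by_cases hx : x = v
    · subst hx
      rw [if_pos rfl]
      refine Finset.sum_congr rfl fun j _ => ?_
      rw [hNapp]
      by_cases hj : j = x <;> simp [hj]
    · rw [if_neg hx]
      simp only [hNapp, if_neg hx]
      simp [ite_mul, Finset.sum_ite_eq' Finset.univ x]
  have hEapp : ∀ x y, (Nᵀ * P' * N) x y =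
      if x = v then (if y = v then b ⬝ᵥ (P' *ᵥ b) else ∑ j, b j * P' j y)
      else (if y = v then ∑ k, P' x k * b k else P' x y) := by
    intro x y
    rw [Matrix.mul_assoc, hNTmul]
    by_cases hx : x = v
    · rw [if_pos hx, if_pos hx]
      by_cases hy : y = v
      · rw [if_pos hy]
        have hPN : ∀ j, (P' * N) j y = ∑ k, P' j k * b k := fun j => by
          rw [hmulN, if_pos hy]
        simp only [hPN]
        rfl
      · rw [if_neg hy]
        have hPN : ∀ j, (P' * N) j y = P' j y := fun j => by
          rw [hmulN, if_neg hy]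
        simp only [hPN]
    · rw [if_neg hx, if_neg hx, hmulN]
  have hdiagapp : ∀ x y, Matrix.diagonal dv x y = if x = y then dv x else 0 :=
    fun x y => Matrix.diagonal_apply dv x y ▸ rfl
  refine ⟨P, ?_, ?_, ?_, ?_, ?_⟩
  · -- positive definiteness
    refine PosDef.of_dotProduct_mulVec_pos ?_ ?_
    · rw [hPdef]
      refine Matrix.IsHermitian.add ?_ ?_
      · rw [← hNH]
        exact Matrix.isHermitian_conjTranspose_mul_mul N hP'.1
      · show (Matrix.diagonal dv).IsHermitian
        ext i j
        simp only [conjTranspose_apply, Matrix.diagonal_apply, star_trivial]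
        by_cases h : j = i
        · subst h; simp
        · rw [if_neg h, if_neg (Ne.symm h)]
    · intro x hx
      have hPSD1 : (Nᵀ * P' * N).PosSemidef := by
        rw [← hNH]
        exact hP'.posSemidef.conjTranspose_mul_mul_same N
      have hsplit : star x ⬝ᵥ (P *ᵥ x) =
          x ⬝ᵥ ((Nᵀ * P' * N) *ᵥ x) + x ⬝ᵥ (Matrix.diagonal dv *ᵥ x) := by
        rw [hPdef, Matrix.add_mulVec, dotProduct_add]
        simp
      have hfirst : x ⬝ᵥ ((Nᵀ * P' * N) *ᵥ x) = (N *ᵥ x) ⬝ᵥ (P' *ᵥ (N *ᵥ x)) := by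
        rw [Matrix.mul_assoc, ← mulVec_mulVec, dotProduct_mulVec, vecMul_transpose,
          mulVec_mulVec]
      have hsecond : x ⬝ᵥ (Matrix.diagonal dv *ᵥ x) = δ * (x v * x v) := by
        simp only [dotProduct, mulVec_diagonal]
        rw [Finset.sum_eq_single v]
        · simp [hdvdef]; ring
        · intro i _ hi; simp [hdvdef, hi]
        · intro h; exact absurd (Finset.mem_univ v) h
      rw [hsplit, hfirst, hsecond]
      by_cases hxv : x v = 0
      · have hNx : N *ᵥ x = x := by
          funext j
          have : (N *ᵥ x) j = ∑ k, N j k * x k := rfl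
          rw [this]
          rw [Finset.sum_congr rfl (fun k _ => by rw [hNapp])]
          simp only [add_mul, ite_mul, zero_mul, one_mul]
          rw [Finset.sum_add_distrib]
          rw [Finset.sum_ite_eq' Finset.univ v (fun k => b j * x k)]
          rw [Finset.sum_ite_eq Finset.univ j (fun k => if k = v then 0 else x k)]
          simp only [Finset.mem_univ, if_pos, if_true]
          by_cases hj : j = v
          · subst hj; simp [hxv]
          · simp [hj, hxv]
        rw [hNx, hxv]
        have := hP'.dotProduct_mulVec_pos hx
        simpa using this
      · have h1 : 0 ≤ (N *ᵥ x) ⬝ᵥ (P' *ᵥ (N *ᵥ x)) := by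
          have := hP'.posSemidef.dotProduct_mulVec_nonneg (N *ᵥ x)
          simpa using this
        have h2 : 0 < δ * (x v * x v) := mul_pos hδ (mul_self_pos.mpr hxv)
        linarith
  · -- untouched entries
    intro x y hxv hyv
    have : P x y = (Nᵀ * P' * N) x y + Matrix.diagonal dv x y := by rw [hPdef]; rfl
    rw [this, hEapp, if_neg hxv, if_neg hyv, hdiagapp]
    by_cases hxy : x = y
    · subst hxy; simp [hdvdef, hxv]
    · simp [hxy]
  · -- diagonal at v
    have : P v v = (Nᵀ * P' * N) v v + Matrix.diagonal dv v v := by rw [hPdef]; rfl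
    rw [this, hEapp, if_pos rfl, if_pos rfl, hdiagapp, if_pos rfl, hquadb]
    simp only [hdvdef, if_pos rfl, hδdef]
    ring
  · -- row at v on C
    intro y hy
    have hyv : y ≠ v := fun h => hvC (h ▸ hy)
    have : P v y = (Nᵀ * P' * N) v y + Matrix.diagonal dv v y := by rw [hPdef]; rfl
    rw [this, hEapp, if_pos rfl, if_neg hyv, hdiagapp, if_neg (fun h => hyv h.symm),
      add_zero]
    exact key1 y hy
  · -- column at v on C
    intro y hy
    have hyv : y ≠ v := fun h => hvC (h ▸ hy)
    have : P y v = (Nᵀ * P' * N) y v + Matrix.diagonal dv y v := by rw [hPdef]; rfl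
    rw [this, hEapp, if_neg hyv, if_pos rfl, hdiagapp, if_neg hyv, add_zero]
    have h1 : (∑ k, P' y k * b k) = ∑ k, b k * P' k y := by
      refine Finset.sum_congr rfl fun k _ => ?_
      rw [hP'sym y k, mul_comm]
    rw [h1, key1 y hy]
    exact hAs v y

end GR19

namespace GR19
open Matrix

set_option linter.unusedSectionVars false
set_option maxHeartbeats 1000000

variable {V : Type*} [Fintype V] [DecidableEq V]

/-- `v` is a simplicial vertex of the subgraph of `G` induced on `s`. -/
def SimpIn (G : SimpleGraph V) (s : Finset V) (v : V) : Prop :=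
  v ∈ s ∧ ∀ x ∈ s, ∀ y ∈ s, G.Adj v x → G.Adj v y → x ≠ y → G.Adj x y

theorem completion_aux (G : SimpleGraph V)
    (hDirac : ∀ s : Finset V, s.Nonempty → ∃ v, SimpIn G s v)
    (A : Matrix V V ℝ) (hAs : ∀ z y, A z y = A y z)
    (hA : ∀ K : Finset V, G.IsClique (↑K : Set V) → PDOn A ↑K) :
    ∀ s : Finset V, ∃ P : Matrix V V ℝ, P.PosDef ∧ (∀ i ∈ s, P i i = A i i) ∧
      (∀ i ∈ s, ∀ j ∈ s, G.Adj i j → P i j = A i j) := by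
  classical
  intro s
  induction s using Finset.strongInduction with
  | _ s IH =>
    rcases s.eq_empty_or_nonempty with rfl | hne
    · exact ⟨1, Matrix.PosDef.one, by simp, by simp⟩
    · obtain ⟨v, hvs, hsimp⟩ := hDirac s hne
      set s' := s.erase v with hs'def
      have hs'sub : s' ⊂ s := Finset.erase_ssubset hvs
      obtain ⟨P', hP'pd, hP'diag, hP'edge⟩ := IH s' hs'sub
      set C := s'.filter (fun y => G.Adj v y) with hCdef
      have hCadj : ∀ y ∈ C, G.Adj v y := fun y hy => (Finset.mem_filter.mp hy).2
      have hCs' : ∀ y ∈ C, y ∈ s' := fun y hy => (Finset.mem_filter.mp hy).1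
      have hCs : ∀ y ∈ C, y ∈ s := fun y hy => Finset.mem_of_mem_erase (hCs' y hy)
      have hvC : v ∉ C := fun h => (Finset.mem_erase.mp (hCs' v h)).1 rfl
      have hclique : G.IsClique (↑(insert v C) : Set V) := by
        intro a ha b hb hab
        simp only [Finset.coe_insert, Set.mem_insert_iff, Finset.mem_coe] at ha hb
        rcases ha with rfl | ha
        · rcases hb with rfl | hb
          · exact absurd rfl hab
          · exact hCadj b hb
        · rcases hb with rfl | hb
          · exact (hCadj a ha).symm
          · exact hsimp a (hCs a ha) b (hCs b hb) (hCadj a ha) (hCadj b hb) hab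
      have hPD : PDOn A ↑(insert v C) := hA _ hclique
      have hmatch : ∀ z ∈ C, ∀ y ∈ C, P' z y = A z y := by
        intro z hz y hy
        by_cases hzy : z = y
        · subst hzy; exact hP'diag z (hCs' z hz)
        · exact hP'edge z (hCs' z hz) y (hCs' y hy)
            (hsimp z (hCs z hz) y (hCs y hy) (hCadj z hz) (hCadj y hy) hzy)
      obtain ⟨P, hPpd, hPoff, hPvv, hProw, hPcol⟩ :=
        extend_posdef A P' hP'pd v C hvC hPD hAs hmatch
      refine ⟨P, hPpd, ?_, ?_⟩
      · intro i hi
        by_cases hiv : i = v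
        · rw [hiv]; exact hPvv
        · rw [hPoff i i hiv hiv]
          exact hP'diag i (Finset.mem_erase.mpr ⟨hiv, hi⟩)
      · intro i hi j hj hij
        by_cases hiv : i = v
        · rw [hiv] at hij ⊢
          have hjv : j ≠ v := fun h => G.irrefl (h ▸ hij)
          exact hProw j (Finset.mem_filter.mpr ⟨Finset.mem_erase.mpr ⟨hjv, hj⟩, hij⟩)
        · by_cases hjv : j = v
          · rw [hjv] at hij ⊢
            exact hPcol i
              (Finset.mem_filter.mpr ⟨Finset.mem_erase.mpr ⟨hiv, hi⟩, hij.symm⟩)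
          · rw [hPoff i j hiv hjv]
            exact hP'edge i (Finset.mem_erase.mpr ⟨hiv, hi⟩)
              j (Finset.mem_erase.mpr ⟨hjv, hj⟩) hij

lemma hermitian_entries {A : Matrix V V ℝ} (h : A.IsHermitian) : ∀ z y, A z y = A y z := by
  intro z y
  have := congrFun (congrFun h y) z
  simpa [Matrix.conjTranspose_apply] using this

lemma PDOn_of_inGenPos {A : Matrix V V ℝ} {d : ℕ} (h : InGenPos A d)
    (K : Finset V) (hK : K.card ≤ d) : PDOn A ↑K := by
  classical
  have hdcard : d ≤ Fintype.card V := by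
    rw [← h.2.1]
    exact A.rank_le_card_width.trans (by simp)
  obtain ⟨α, hKα, -, hαcard⟩ := Finset.exists_subsuperset_card_eq
    (Finset.subset_univ K) hK (by simpa using hdcard)
  have hpsd : (A.submatrix ((↑·) : α → V) ((↑·) : α → V)).PosSemidef :=
    h.1.submatrix _
  have hdet : (A.submatrix ((↑·) : α → V) ((↑·) : α → V)).det ≠ 0 := h.2.2 α hαcard
  have hpd := posDef_of_posSemidef_det hpsd hdet
  exact (PDOn_of_posDef_submatrix hpd).mono (by exact_mod_cast hKα)

end GR19

namespace GR19
open Matrix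

set_option linter.unusedSectionVars false
set_option maxHeartbeats 1000000

variable {V : Type*} [Fintype V] [DecidableEq V]

section Witness

variable (r : ℕ)

noncomputable def tfun : V → ℝ := fun v => ((Fintype.equivFin V v : ℕ) : ℝ)

lemma tfun_inj : Function.Injective (tfun : V → ℝ) := by
  intro a b h
  have h1 : ((Fintype.equivFin V a : ℕ) : ℝ) = ((Fintype.equivFin V b : ℕ) : ℝ) := h
  have h2 : (Fintype.equivFin V a : ℕ) = (Fintype.equivFin V b : ℕ) := Nat.cast_injective h1
  exact (Fintype.equivFin V).injective (Fin.val_injective h2)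

noncomputable def Mvan : Matrix V (Fin r) ℝ := fun v k => tfun v ^ (k : ℕ)

noncomputable def Avan : Matrix V V ℝ := Mvan r * (Mvan r)ᵀ

lemma Mvan_transpose_eq_conj : ((Mvan r : Matrix V (Fin r) ℝ))ᵀ = (Mvan r)ᴴ := by
  ext i j; simp [conjTranspose_apply]

lemma Avan_posSemidef : (Avan r : Matrix V V ℝ).PosSemidef := by
  rw [Avan, Mvan_transpose_eq_conj]
  exact posSemidef_self_mul_conjTranspose _

/-- In any subset `β`, the principal submatrix of `Avan` is the Gram matrix of rows of `Mvan`. -/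
lemma Avan_submatrix (β : Finset V) :
    (Avan r : Matrix V V ℝ).submatrix ((↑·) : β → V) ((↑·) : β → V) =
      (Mvan r).submatrix ((↑·) : β → V) id *
        ((Mvan r).submatrix ((↑·) : β → V) id)ᵀ := by
  ext i j
  simp [Avan, Matrix.mul_apply]

lemma van_square_det_ne_zero {n : ℕ} (u : Fin n → ℝ) (hu : Function.Injective u) :
    (Matrix.vandermonde u).det ≠ 0 := by
  rw [Matrix.det_vandermonde]
  refine Finset.prod_ne_zero_iff.mpr fun i _ => Finset.prod_ne_zero_iff.mpr fun j hj => ?_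
  have hij : i ≠ j := fun h => by
    rw [h] at hj; exact absurd (Finset.mem_Ioi.mp hj) (lt_irrefl _)
  exact sub_ne_zero.mpr fun h => hij (hu h.symm)

lemma Avan_det_ne_zero (α : Finset V) (hcard : α.card = r) :
    ((Avan r : Matrix V V ℝ).submatrix ((↑·) : α → V) ((↑·) : α → V)).det ≠ 0 := by
  classical
  have hc : Fintype.card α = r := by simp [hcard]
  set e : ↥α ≃ Fin r := Fintype.equivFinOfCardEq hc with hedef
  set N₀ : Matrix (Fin r) (Fin r) ℝ :=
    Matrix.vandermonde (fun i => tfun ((e.symm i : α) : V)) with hN0def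
  have hN0 : (Mvan r).submatrix ((↑·) : α → V) id = N₀.submatrix e id := by
    ext i j
    simp [Mvan, hN0def, Matrix.vandermonde]
  have hsub : (Avan r : Matrix V V ℝ).submatrix ((↑·) : α → V) ((↑·) : α → V) =
      (N₀ * N₀ᵀ).submatrix e e := by
    rw [Avan_submatrix, hN0]
    ext i j
    simp [Matrix.mul_apply]
  rw [hsub, Matrix.det_submatrix_equiv_self, Matrix.det_mul, Matrix.det_transpose]
  have hne : N₀.det ≠ 0 := by
    apply van_square_det_ne_zero
    intro a b hab
    exact e.symm.injective (Subtype.coe_injective (tfun_inj hab))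
  exact mul_ne_zero hne hne

lemma Mvan_rank (hr : r ≤ Fintype.card V) : (Mvan r : Matrix V (Fin r) ℝ).rank = r := by
  classical
  refine le_antisymm ((Mvan r).rank_le_card_width.trans (by simp)) ?_
  obtain ⟨α, -, hαcard⟩ := Finset.exists_subset_card_eq
    (show r ≤ (Finset.univ : Finset V).card by simpa using hr)
  -- injectivity of mulVecLin
  have hc : Fintype.card α = r := by simp [hαcard]
  set e : ↥α ≃ Fin r := Fintype.equivFinOfCardEq hc with hedef
  set N₀ : Matrix (Fin r) (Fin r) ℝ :=
    Matrix.vandermonde (fun i => tfun ((e.symm i : α) : V)) with hN0def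
  have hne : N₀.det ≠ 0 := by
    apply van_square_det_ne_zero
    intro a b hab
    exact e.symm.injective (Subtype.coe_injective (tfun_inj hab))
  have hinj : Function.Injective (Mvan r : Matrix V (Fin r) ℝ).mulVecLin := by
    rw [injective_iff_map_eq_zero]
    intro c hc0
    by_contra hcne
    apply hne
    apply Matrix.exists_mulVec_eq_zero_iff.mp
    refine ⟨c, hcne, ?_⟩
    funext i
    have : ((Mvan r : Matrix V (Fin r) ℝ) *ᵥ c) ((e.symm i : α) : V) = 0 := by
      rw [show (Mvan r : Matrix V (Fin r) ℝ) *ᵥ c = 0 from hc0]; rfl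
    calc (N₀ *ᵥ c) i = ((Mvan r : Matrix V (Fin r) ℝ) *ᵥ c) ((e.symm i : α) : V) := by
          simp [hN0def, mulVec, dotProduct, Mvan, Matrix.vandermonde]
      _ = 0 := this
  have : Module.finrank ℝ (LinearMap.range (Mvan r : Matrix V (Fin r) ℝ).mulVecLin) =
      Module.finrank ℝ (Fin r → ℝ) := LinearMap.finrank_range_of_inj hinj
  rw [Matrix.rank, this, Module.finrank_fintype_fun_eq_card]
  simp

lemma Avan_rank (hr : r ≤ Fintype.card V) : (Avan r : Matrix V V ℝ).rank = r := by
  rw [Avan, Mvan_transpose_eq_conj, Matrix.rank_self_mul_conjTranspose]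
  exact Mvan_rank r hr

lemma Avan_inGenPos (hr : r ≤ Fintype.card V) : InGenPos (Avan r : Matrix V V ℝ) r :=
  ⟨Avan_posSemidef r, Avan_rank r hr, fun α hα => Avan_det_ne_zero r α hα⟩

/-- Any principal submatrix of `Avan r` of size `> r` is singular. -/
lemma Avan_det_zero (β : Finset V) (hβ : r < β.card) :
    ((Avan r : Matrix V V ℝ).submatrix ((↑·) : β → V) ((↑·) : β → V)).det = 0 := by
  classical
  set N : Matrix ↥β (Fin r) ℝ := (Mvan r).submatrix ((↑·) : β → V) id with hNdef
  have hcard : Module.finrank ℝ (Fin r → ℝ) < Fintype.card ↥β := by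
    rw [Module.finrank_fintype_fun_eq_card]
    simpa using hβ
  have hdep : ¬ LinearIndependent ℝ (fun i : ↥β => N i) := by
    intro hli
    exact absurd (hli.fintype_card_le_finrank) (not_le.mpr hcard)
  obtain ⟨g, hgsum, i₀, hgi₀⟩ := Fintype.not_linearIndependent_iff.mp hdep
  have hg0 : g ᵥ* N = 0 := by
    funext j
    have := congrFun hgsum j
    simpa [vecMul, dotProduct] using this
  have hgA : ((Avan r : Matrix V V ℝ).submatrix ((↑·) : β → V) ((↑·) : β → V))ᵀ *ᵥ g = 0 := by
    rw [Avan_submatrix, ← hNdef]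
    have h1 : (N * Nᵀ)ᵀ *ᵥ g = N *ᵥ (g ᵥ* N) := by
      rw [Matrix.transpose_mul, Matrix.transpose_transpose, ← Matrix.mulVec_mulVec,
        Matrix.mulVec_transpose]
    rw [h1, hg0, mulVec_zero]
  have hdet : ((Avan r : Matrix V V ℝ).submatrix ((↑·) : β → V) ((↑·) : β → V))ᵀ.det = 0 :=
    Matrix.exists_mulVec_eq_zero_iff.mp ⟨g, fun h => hgi₀ (congrFun h i₀), hgA⟩
  rwa [Matrix.det_transpose] at hdet

end Witness

/-- If `G` has a clique of size `> r` then the Gaussian rank property fails at level `r`. -/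
lemma not_grankProp_of_clique (G : SimpleGraph V) (K : Finset V)
    (hK : G.IsClique (↑K : Set V)) {r : ℕ} (hrK : r < K.card) : ¬ GRankProp G r := by
  classical
  intro hgr
  have hrcard : r ≤ Fintype.card V := by
    have : K.card ≤ Fintype.card V := by
      simpa using Finset.card_le_card (Finset.subset_univ K)
    omega
  obtain ⟨P, hPpd, hPdiag, hPedge⟩ := hgr (Avan r) (Avan_inGenPos r hrcard)
  obtain ⟨β, hβK, hβcard⟩ := Finset.exists_subset_card_eq (show r + 1 ≤ K.card from hrK)
  have hβclique : G.IsClique (↑β : Set V) := hK.subset (by exact_mod_cast hβK)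
  have hmatch : P.submatrix ((↑·) : β → V) ((↑·) : β → V) =
      (Avan r : Matrix V V ℝ).submatrix ((↑·) : β → V) ((↑·) : β → V) := by
    ext i j
    by_cases hij : (i : V) = (j : V)
    · simp only [submatrix_apply]
      rw [hij]
      exact hPdiag _
    · exact hPedge _ _ (hβclique i.2 j.2 hij)
  have hdet0 : (P.submatrix ((↑·) : β → V) ((↑·) : β → V)).det = 0 := by
    rw [hmatch]
    exact Avan_det_zero r β (by omega)
  have hpd : (P.submatrix ((↑·) : β → V) ((↑·) : β → V)).PosDef :=
    posDef_submatrix_of_PDOn hPpd.1 (PDOn.of_posDef hPpd ↑β)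
  exact (ne_of_gt hpd.det_pos) hdet0

end GR19

namespace GR19

set_option linter.unusedSectionVars false
set_option maxHeartbeats 1000000

variable {V : Type*}

/-- Reformulation of chordality: there is no injective map of a cyclic index set into `G`
whose adjacency is exactly cyclic consecutiveness. -/
lemma chordal_no_cycle (G : SimpleGraph V)
    (hchordal : ∀ n : ℕ, 4 ≤ n → ∀ s : Set V,
      IsEmpty (G.induce s ≃g SimpleGraph.cycleGraph n)) :
    ∀ n, 4 ≤ n → ∀ f : Fin n → V, Function.Injective f →
      ¬(∀ a b : Fin n, G.Adj (f a) (f b) ↔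
        ((b : ℕ) = ((a : ℕ) + 1) % n ∨ (a : ℕ) = ((b : ℕ) + 1) % n)) := by
  intro n hn f hf hadj
  obtain ⟨k, rfl⟩ : ∃ k, n = k + 4 := ⟨n - 4, by omega⟩
  set s : Set V := Set.range f with hsdef
  set e : Fin (k + 4) ≃ s := Equiv.ofInjective f hf with hedef
  have hcoe : ∀ a : Fin (k + 4), ((e a : s) : V) = f a := fun a => rfl
  have hval : ∀ a : Fin (k+4), ((a + 1 : Fin (k+4)) : ℕ) = ((a : ℕ) + 1) % (k + 4) := by
    intro a
    rw [Fin.val_add]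
    norm_num
  have hmain : ∀ a b : Fin (k + 4),
      (G.induce s).Adj (e a) (e b) ↔ (SimpleGraph.cycleGraph (k + 4)).Adj a b := by
    intro a b
    have h1 : (G.induce s).Adj (e a) (e b) ↔ G.Adj (f a) (f b) := by
      constructor
      · intro h; exact h
      · intro h; exact h
    have h2 : (SimpleGraph.cycleGraph (k + 4)).Adj a b ↔ (a - b = 1 ∨ b - a = 1) :=
      SimpleGraph.cycleGraph_adj (n := k + 2)
    rw [h1, h2, hadj a b]
    have e1 : a - b = 1 ↔ a = b + 1 := by
      rw [sub_eq_iff_eq_add]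
      exact ⟨fun h => h.trans (add_comm 1 b), fun h => h.trans (add_comm b 1)⟩
    have e2 : b - a = 1 ↔ b = a + 1 := by
      rw [sub_eq_iff_eq_add]
      exact ⟨fun h => h.trans (add_comm 1 a), fun h => h.trans (add_comm a 1)⟩
    rw [e1, e2]
    have e3 : a = b + 1 ↔ (a : ℕ) = ((b : ℕ) + 1) % (k + 4) := by
      rw [Fin.ext_iff, hval b]
    have e4 : b = a + 1 ↔ (b : ℕ) = ((a : ℕ) + 1) % (k + 4) := by
      rw [Fin.ext_iff, hval a]
    rw [e3, e4]
    tauto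
  have iso : SimpleGraph.cycleGraph (k + 4) ≃g G.induce s :=
    { toEquiv := e, map_rel_iff' := fun {a b} => hmain a b }
  exact (hchordal (k + 4) (by omega) s).false iso.symm

/-- Two internally disjoint induced paths (of length ≥ 2 each) between nonadjacent
endpoints, with no edges or equalities between their interiors, give a contradiction
in a chordal graph. -/
lemma two_paths_false (G : SimpleGraph V)
    (hch : ∀ n, 4 ≤ n → ∀ f : Fin n → V, Function.Injective f →
      ¬(∀ a b : Fin n, G.Adj (f a) (f b) ↔
        ((b : ℕ) = ((a : ℕ) + 1) % n ∨ (a : ℕ) = ((b : ℕ) + 1) % n)))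
    (x y : V) (m l : ℕ) (p q : ℕ → V) (hm : 2 ≤ m) (hl : 2 ≤ l)
    (hp0 : p 0 = x) (hpm : p m = y) (hq0 : q 0 = x) (hql : q l = y)
    (hpadj : ∀ i j, i ≤ m → j ≤ m → (G.Adj (p i) (p j) ↔ (j = i + 1 ∨ i = j + 1)))
    (hqadj : ∀ i j, i ≤ l → j ≤ l → (G.Adj (q i) (q j) ↔ (j = i + 1 ∨ i = j + 1)))
    (hpinj : ∀ i j, i ≤ m → j ≤ m → p i = p j → i = j)
    (hqinj : ∀ i j, i ≤ l → j ≤ l → q i = q j → i = j)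
    (hcross : ∀ i j, 1 ≤ i → i ≤ m - 1 → 1 ≤ j → j ≤ l - 1 →
      ¬G.Adj (p i) (q j) ∧ p i ≠ q j) : False := by
  set n := m + l with hndef
  have hn4 : 4 ≤ n := by omega
  clear_value n
  set F : ℕ → V := fun t => if t ≤ m then p t else q (n - t) with hFdef
  have hF_p : ∀ t, t ≤ m → F t = p t := fun t ht => if_pos ht
  have hF_q : ∀ t, m < t → F t = q (n - t) := fun t ht => if_neg (not_le.mpr ht)
  -- the cyclic adjacency predicate
  set cyc : ℕ → ℕ → Prop := fun i j =>
    j = i + 1 ∨ i = j + 1 ∨ (i = 0 ∧ j = n - 1) ∨ (j = 0 ∧ i = n - 1) with hcycdef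
  -- adjacency across the two halves
  have caseC : ∀ i j, i ≤ m → m < j → j < n → (G.Adj (F i) (F j) ↔ cyc i j) := by
    intro i j him hjm hjn
    rw [hF_p i him, hF_q j hjm]
    have hj1 : 1 ≤ n - j := by omega
    have hj2 : n - j ≤ l - 1 := by omega
    by_cases hi0 : i = 0
    · rw [show p i = q 0 from by rw [hi0, hp0, hq0],
        hqadj 0 (n - j) (by omega) (by omega)]
      simp only [hcycdef]
      omega
    · by_cases him' : i = m
      · rw [show p i = q l from by rw [him', hpm, hql],
        hqadj l (n - j) le_rfl (by omega)]
        simp only [hcycdef]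
        omega
      · refine iff_of_false (hcross i (n - j) (by omega) (by omega) (by omega) (by omega)).1 ?_
        simp only [hcycdef]
        omega
  have adjF : ∀ i j, i < n → j < n → (G.Adj (F i) (F j) ↔ cyc i j) := by
    intro i j hi hj
    rcases le_or_gt i m with him | him <;> rcases le_or_gt j m with hjm | hjm
    · rw [hF_p i him, hF_p j hjm, hpadj i j him hjm]
      simp only [hcycdef]
      omega
    · exact caseC i j him hjm hj
    · rw [G.adj_comm, caseC j i hjm him hi]
      simp only [hcycdef]
      omega
    · rw [hF_q i him, hF_q j hjm, hqadj (n - i) (n - j) (by omega) (by omega)]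
      simp only [hcycdef]
      omega
  -- injectivity
  have injC : ∀ i j, i ≤ m → m < j → j < n → F i = F j → False := by
    intro i j him hjm hjn hFij
    rw [hF_p i him, hF_q j hjm] at hFij
    have hj1 : 1 ≤ n - j := by omega
    have hj2 : n - j ≤ l - 1 := by omega
    by_cases hi0 : i = 0
    · rw [hi0, hp0, ← hq0] at hFij
      have := hqinj 0 (n - j) (by omega) (by omega) hFij
      omega
    · by_cases him' : i = m
      · rw [him', hpm, ← hql] at hFij
        have := hqinj l (n - j) le_rfl (by omega) hFij
        omega
      · exact (hcross i (n - j) (by omega) (by omega) (by omega) (by omega)).2 hFij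
  have injF : ∀ i j, i < n → j < n → F i = F j → i = j := by
    intro i j hi hj hFij
    rcases le_or_gt i m with him | him <;> rcases le_or_gt j m with hjm | hjm
    · rw [hF_p i him, hF_p j hjm] at hFij
      exact hpinj i j him hjm hFij
    · exact absurd hFij (fun h => injC i j him hjm hj h)
    · exact absurd hFij.symm (fun h => injC j i hjm him hi h)
    · rw [hF_q i him, hF_q j hjm] at hFij
      have := hqinj (n - i) (n - j) (by omega) (by omega) hFij
      omega
  -- package into Fin n
  have hmod : ∀ t : ℕ, t < n → (t + 1) % n = if t + 1 = n then 0 else t + 1 := by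
    intro t ht
    rcases eq_or_ne (t + 1) n with h | h
    · rw [if_pos h, h, Nat.mod_self]
    · rw [if_neg h, Nat.mod_eq_of_lt (by omega)]
  refine hch n hn4 (fun a : Fin n => F a.val) ?_ ?_
  · intro a b hab
    exact Fin.ext (injF a.val b.val a.isLt b.isLt hab)
  · intro a b
    rw [adjF a.val b.val a.isLt b.isLt, hmod a.val a.isLt, hmod b.val b.isLt]
    simp only [hcycdef]
    split_ifs <;> omega

end GR19

namespace GR19

set_option linter.unusedSectionVars false
set_option maxHeartbeats 1000000

variable {V : Type*}

/-- A chain (walk) of length `k` from `a` to `b` inside the vertex set `u`. -/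
def IsChain (G : SimpleGraph V) (u : Set V) (c : ℕ → V) (k : ℕ) (a b : V) : Prop :=
  c 0 = a ∧ c k = b ∧ (∀ i, i < k → G.Adj (c i) (c (i + 1))) ∧ (∀ i, i ≤ k → c i ∈ u)

/-- Reachability inside a vertex set. -/
def Reach (G : SimpleGraph V) (u : Set V) (a b : V) : Prop := ∃ k c, IsChain G u c k a b

namespace Reach

variable {G : SimpleGraph V} {u : Set V} {a b d : V}

lemma refl (ha : a ∈ u) : Reach G u a a :=
  ⟨0, fun _ => a, rfl, rfl, fun i hi => absurd hi (by omega), fun _ _ => ha⟩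

lemma mem_left (h : Reach G u a b) : a ∈ u := by
  obtain ⟨k, c, h0, hk, hadj, hmem⟩ := h
  rw [← h0]; exact hmem 0 (by omega)

lemma mem_right (h : Reach G u a b) : b ∈ u := by
  obtain ⟨k, c, h0, hk, hadj, hmem⟩ := h
  rw [← hk]; exact hmem k le_rfl

lemma symm (h : Reach G u a b) : Reach G u b a := by
  obtain ⟨k, c, h0, hk, hadj, hmem⟩ := h
  refine ⟨k, fun i => c (k - i), by simpa using hk, by simpa using h0, ?_, ?_⟩
  · intro i hi
    have h2 : k - (i + 1) + 1 = k - i := by omega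
    have := hadj (k - (i + 1)) (by omega)
    rw [h2] at this
    exact this.symm
  · intro i _
    exact hmem _ (by omega)

lemma trans (h1 : Reach G u a b) (h2 : Reach G u b d) : Reach G u a d := by
  obtain ⟨k1, c1, h10, h1k, h1adj, h1mem⟩ := h1
  obtain ⟨k2, c2, h20, h2k, h2adj, h2mem⟩ := h2
  set c : ℕ → V := fun i => if i ≤ k1 then c1 i else c2 (i - k1) with hcdef
  have hc1 : ∀ i, i ≤ k1 → c i = c1 i := fun i hi => if_pos hi
  have hc2 : ∀ i, k1 ≤ i → c i = c2 (i - k1) := by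
    intro i hi
    rcases eq_or_lt_of_le hi with rfl | hlt
    · rw [hc1 k1 le_rfl, Nat.sub_self, h20, h1k]
    · exact if_neg (by omega)
  refine ⟨k1 + k2, c, by rw [hc1 0 (by omega), h10], by rw [hc2 _ (by omega)]; simpa using h2k,
    ?_, ?_⟩
  · intro i hi
    rcases lt_or_ge i k1 with h | h
    · rw [hc1 i (by omega), hc1 (i + 1) (by omega)]
      exact h1adj i h
    · rw [hc2 i h, hc2 (i + 1) (by omega)]
      have h3 : i + 1 - k1 = (i - k1) + 1 := by omega
      rw [h3]
      exact h2adj (i - k1) (by omega)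
  · intro i hi
    rcases le_or_gt i k1 with h | h
    · rw [hc1 i h]; exact h1mem i h
    · rw [hc2 i (by omega)]; exact h2mem _ (by omega)

lemma mono {u' : Set V} (h : Reach G u a b) (hu : u ⊆ u') : Reach G u' a b := by
  obtain ⟨k, c, h0, hk, hadj, hmem⟩ := h
  exact ⟨k, c, h0, hk, hadj, fun i hi => hu (hmem i hi)⟩

end Reach

lemma reach_adj {G : SimpleGraph V} {u : Set V} {a b : V} (h : G.Adj a b)
    (ha : a ∈ u) (hb : b ∈ u) : Reach G u a b := by
  refine ⟨1, fun i => if i = 0 then a else b, by simp, by simp, ?_, ?_⟩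
  · intro i hi
    have : i = 0 := by omega
    simpa [this] using h
  · intro i _
    by_cases hi : i = 0 <;> simp [hi, ha, hb]

/-- A minimal-length chain between nonadjacent distinct vertices is an induced path. -/
lemma exists_min_chain {G : SimpleGraph V} {u : Set V} {x y : V}
    (hxy : x ≠ y) (hnadj : ¬G.Adj x y) (hreach : Reach G u x y) :
    ∃ k c, IsChain G u c k x y ∧ 2 ≤ k ∧
      (∀ i j, i ≤ k → j ≤ k → i ≠ j → c i ≠ c j) ∧
      (∀ i j, i ≤ k → j ≤ k → (G.Adj (c i) (c j) ↔ (j = i + 1 ∨ i = j + 1))) := by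
  classical
  set S : Set ℕ := {k | ∃ c, IsChain G u c k x y} with hSdef
  have hSne : S.Nonempty := by
    obtain ⟨k, c, hc⟩ := hreach
    exact ⟨k, c, hc⟩
  set k := sInf S with hkdef
  obtain ⟨c, hc⟩ : ∃ c, IsChain G u c k x y := Nat.sInf_mem hSne
  have hmin : ∀ k', k' < k → ¬∃ c', IsChain G u c' k' x y := by
    intro k' hk' hex
    have h2 : k ≤ k' := by rw [hkdef]; exact Nat.sInf_le hex
    omega
  clear_value k
  obtain ⟨h0, hk, hadj, hmem⟩ := hc
  have hk2 : 2 ≤ k := by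
    by_contra h
    interval_cases k
    · exact hxy (h0 ▸ hk ▸ rfl)
    · exact hnadj (by rw [← h0, ← hk]; exact hadj 0 (by omega))
  -- splicing: no repetitions
  have hinj : ∀ i j, i ≤ k → j ≤ k → i ≠ j → c i ≠ c j := by
    -- enough to handle i < j
    suffices h : ∀ i j, i < j → j ≤ k → c i ≠ c j by
      intro i j hi hj hij
      rcases lt_or_gt_of_ne hij with h' | h'
      · exact h i j h' hj
      · exact fun he => h j i h' hi he.symm
    intro i j hij hj hcij
    set d := j - i with hddef
    set c' : ℕ → V := fun t => if t ≤ i then c t else c (t + d) with hc'def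
    have hc'1 : ∀ t, t ≤ i → c' t = c t := fun t ht => if_pos ht
    have hc'2 : ∀ t, i ≤ t → c' t = c (t + d) := by
      intro t ht
      rcases eq_or_lt_of_le ht with rfl | hlt
      · rw [hc'1 i le_rfl]
        have hj' : i + d = j := by omega
        rw [hj', hcij]
      · exact if_neg (by omega)
    refine absurd (hmin (k - d) (by omega) ⟨c', ?_, ?_, ?_, ?_⟩) (fun hF => hF)
    · rw [hc'1 0 (by omega), h0]
    · rw [hc'2 (k - d) (by omega)]
      have : k - d + d = k := by omega
      rw [this, hk]
    · intro t ht
      rcases lt_or_ge t i with h | h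
      · rw [hc'1 t (by omega), hc'1 (t + 1) (by omega)]
        exact hadj t (by omega)
      · rw [hc'2 t h, hc'2 (t + 1) (by omega)]
        have h3 : t + 1 + d = (t + d) + 1 := by omega
        rw [h3]
        exact hadj (t + d) (by omega)
    · intro t ht
      rcases le_or_gt t i with h | h
      · rw [hc'1 t h]; exact hmem t (by omega)
      · rw [hc'2 t (by omega)]; exact hmem _ (by omega)
  -- splicing: no chords
  have hchord : ∀ i j, i + 1 < j → j ≤ k → ¬G.Adj (c i) (c j) := by
    intro i j hij hj hadj'
    set d := j - i - 1 with hddef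
    set c' : ℕ → V := fun t => if t ≤ i then c t else c (t + d) with hc'def
    have hc'1 : ∀ t, t ≤ i → c' t = c t := fun t ht => if_pos ht
    have hc'2 : ∀ t, i < t → c' t = c (t + d) := fun t ht => if_neg (by omega)
    refine absurd (hmin (k - d) (by omega) ⟨c', ?_, ?_, ?_, ?_⟩) (fun hF => hF)
    · rw [hc'1 0 (by omega), h0]
    · rw [hc'2 (k - d) (by omega)]
      have : k - d + d = k := by omega
      rw [this, hk]
    · intro t ht
      rcases lt_or_ge t i with h | h
      · rw [hc'1 t (by omega), hc'1 (t + 1) (by omega)]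
        exact hadj t (by omega)
      · rcases eq_or_lt_of_le h with rfl | h'
        · rw [hc'1 i le_rfl, hc'2 (i + 1) (by omega)]
          have hj' : i + 1 + d = j := by omega
          rw [hj']
          exact hadj'
        · rw [hc'2 t h', hc'2 (t + 1) (by omega)]
          have h3 : t + 1 + d = (t + d) + 1 := by omega
          rw [h3]
          exact hadj (t + d) (by omega)
    · intro t ht
      rcases le_or_gt t i with h | h
      · rw [hc'1 t h]; exact hmem t (by omega)
      · rw [hc'2 t (by omega)]; exact hmem _ (by omega)
  refine ⟨k, c, ⟨h0, hk, hadj, hmem⟩, hk2, hinj, ?_⟩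
  intro i j hi hj
  constructor
  · intro h
    by_contra hcon
    push_neg at hcon
    rcases lt_trichotomy i j with h' | rfl | h'
    · exact hchord i j (by omega) hj h
    · exact G.irrefl h
    · exact hchord j i (by omega) hi h.symm
  · intro h
    rcases h with rfl | rfl
    · exact hadj i (by omega)
    · exact (hadj j (by omega)).symm

end GR19

namespace GR19

set_option linter.unusedSectionVars false
set_option maxHeartbeats 2000000

variable {V : Type*} [DecidableEq V]

theorem dirac (G : SimpleGraph V)
    (hch : ∀ n, 4 ≤ n → ∀ f : Fin n → V, Function.Injective f →
      ¬(∀ a b : Fin n, G.Adj (f a) (f b) ↔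
        ((b : ℕ) = ((a : ℕ) + 1) % n ∨ (a : ℕ) = ((b : ℕ) + 1) % n))) :
    ∀ n : ℕ, ∀ s : Finset V, s.card = n → s.Nonempty →
      ((∃ v, SimpIn G s v) ∧
        (∀ a ∈ s, ∀ b ∈ s, a ≠ b → ¬G.Adj a b →
          ∃ v w, SimpIn G s v ∧ SimpIn G s w ∧ v ≠ w ∧ ¬G.Adj v w)) := by
  intro n
  induction n using Nat.strong_induction_on with
  | _ n IH =>
  intro s hcard hne
  classical
  have key : ∀ a ∈ s, ∀ b ∈ s, a ≠ b → ¬G.Adj a b →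
      ∃ v w, SimpIn G s v ∧ SimpIn G s w ∧ v ≠ w ∧ ¬G.Adj v w := by
    intro a ha b hb hab hnadj
    set U : Set (Finset V) :=
      {T | T ⊆ s ∧ a ∉ T ∧ b ∉ T ∧ ¬Reach G (↑(s \ T)) a b} with hUdef
    have hU0 : (s \ ({a, b} : Finset V)) ∈ U := by
      refine ⟨Finset.sdiff_subset, by simp [ha], by simp [hb], ?_⟩
      rintro ⟨k, c, h0, hk, hadjc, hmemc⟩
      have hmem' : ∀ i, i ≤ k → c i = a ∨ c i = b := by
        intro i hi
        have h1 := hmemc i hi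
        simp only [Finset.coe_sdiff, Set.mem_diff, Finset.mem_coe, Finset.mem_sdiff,
          Finset.mem_insert, Finset.mem_singleton, not_and, not_not] at h1
        tauto
      rcases Nat.eq_zero_or_pos k with rfl | hk0
      · exact hab (h0 ▸ hk ▸ rfl)
      · have hstep := hadjc 0 hk0
        rw [h0] at hstep
        rcases hmem' 1 (by omega) with h1 | h1
        · rw [h1] at hstep; exact G.irrefl hstep
        · rw [h1] at hstep; exact hnadj hstep
    have hKne : {k | ∃ T ∈ U, T.card = k}.Nonempty := ⟨_, _, hU0, rfl⟩
    obtain ⟨T, hTU, hTcard⟩ := Nat.sInf_mem hKne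
    have hTmin : ∀ T' ∈ U, T.card ≤ T'.card := by
      intro T' hT'
      rw [hTcard]
      exact Nat.sInf_le ⟨T', hT', rfl⟩
    obtain ⟨hTs, haT, hbT, hnreach⟩ := hTU
    set W : Set V := ↑(s \ T) with hWdef
    have hWmem : ∀ z, z ∈ W ↔ z ∈ s ∧ z ∉ T := by
      intro z; simp [hWdef, Finset.mem_sdiff]
    have haW : a ∈ W := (hWmem a).mpr ⟨ha, haT⟩
    have hbW : b ∈ W := (hWmem b).mpr ⟨hb, hbT⟩
    have hstepR : ∀ r z, Reach G W r z → ∀ w, G.Adj z w → w ∈ W → Reach G W r w :=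
      fun r z hz w hadjz hw => hz.trans (reach_adj hadjz hz.mem_right hw)
    have hchainR : ∀ r e k c, IsChain G W c k r e → ∀ i, i ≤ k → Reach G W r (c i) := by
      intro r e k c hc
      obtain ⟨h0, hk', hadjc, hmemc⟩ := hc
      intro i
      induction i with
      | zero => intro _; rw [h0]; exact Reach.refl (h0 ▸ hmemc 0 (by omega))
      | succ i ih =>
        intro hi
        exact hstepR r _ (ih (by omega)) _ (hadjc i (by omega)) (hmemc (i + 1) hi)
    have hreachin : ∀ r z, Reach G W r z → Reach G {w | Reach G W r w} r z := by
      intro r z hz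
      obtain ⟨k, c, hc⟩ := hz
      exact ⟨k, c, hc.1, hc.2.1, hc.2.2.1, fun i hi => hchainR r z k c hc i hi⟩
    have hreach' : ∀ t ∈ T, Reach G (↑(s \ T.erase t)) a b := by
      intro t ht
      by_contra hnr
      have hmemU : T.erase t ∈ U :=
        ⟨(Finset.erase_subset _ _).trans hTs,
          fun h => haT (Finset.mem_of_mem_erase h),
          fun h => hbT (Finset.mem_of_mem_erase h), hnr⟩
      have h1 := hTmin _ hmemU
      have h2 := Finset.card_erase_lt_of_mem ht
      omega
    have hexit : ∀ t ∈ T, ∀ (r e : V) (k : ℕ) (c : ℕ → V),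
        IsChain G (↑(s \ T.erase t)) c k r e → r ∈ W → ¬Reach G W r e →
        ∃ z, Reach G W r z ∧ G.Adj z t := by
      intro t ht r e k c hc hr hnre
      obtain ⟨h0, hk', hadjc, hmemc⟩ := hc
      set I : Set ℕ := {i | i ≤ k ∧ ¬Reach G W r (c i)} with hIdef
      have hIne : I.Nonempty := ⟨k, le_rfl, by rw [hk']; exact hnre⟩
      obtain ⟨hi1le, hi1nr⟩ := Nat.sInf_mem hIne
      have hIsub : ∀ j, j ∈ I → sInf I ≤ j := fun j hj => Nat.sInf_le hj
      generalize hgen : sInf I = i1 at hi1le hi1nr hIsub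
      have hi1pos : i1 ≠ 0 := by
        intro h
        apply hi1nr
        rw [h, h0]
        exact Reach.refl hr
      have hprev : Reach G W r (c (i1 - 1)) := by
        by_contra hcon
        have h5 : i1 ≤ i1 - 1 := hIsub (i1 - 1) ⟨by omega, hcon⟩
        omega
      have hadj1 : G.Adj (c (i1 - 1)) (c i1) := by
        have h6 := hadjc (i1 - 1) (by omega)
        have h7 : i1 - 1 + 1 = i1 := by omega
        rwa [h7] at h6
      have hmem1 := hmemc i1 hi1le
      have hnW : c i1 ∉ W := fun hW => hi1nr (hstepR r _ hprev _ hadj1 hW)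
      have hct : c i1 = t := by
        simp only [Finset.coe_sdiff, Set.mem_diff, Finset.mem_coe, Finset.mem_erase,
          not_and] at hmem1
        have h8 : ¬(c i1 ∈ s ∧ c i1 ∉ T) := fun h => hnW ((hWmem _).mpr h)
        tauto
      exact ⟨c (i1 - 1), hprev, hct ▸ hadj1⟩
    have hnbr : ∀ t ∈ T, (∃ z, Reach G W a z ∧ G.Adj z t) ∧
        (∃ z, Reach G W b z ∧ G.Adj z t) := by
      intro t ht
      obtain ⟨k, c, hc⟩ := hreach' t ht
      constructor
      · exact hexit t ht a b k c hc haW hnreach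
      · obtain ⟨k2, c2, hc2⟩ := Reach.symm ⟨k, c, hc⟩
        exact hexit t ht b a k2 c2 hc2 hbW (fun h => hnreach h.symm)
    have hdisj : ∀ z, Reach G W a z → Reach G W b z → False :=
      fun z h1 h2 => hnreach (h1.trans h2.symm)
    have hTclq : ∀ x ∈ T, ∀ y ∈ T, x ≠ y → G.Adj x y := by
      intro x hx y hy hxy
      by_contra hnadjxy
      obtain ⟨⟨zxa, hzxa, hzxadj⟩, ⟨zxb, hzxb, hzxbadj⟩⟩ := hnbr x hx
      obtain ⟨⟨zya, hzya, hzyadj⟩, ⟨zyb, hzyb, hzybadj⟩⟩ := hnbr y hy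
      set uA : Set V := {w | Reach G W a w} ∪ {x, y} with huAdef
      have hxuA : x ∈ uA := Or.inr (by simp)
      have hyuA : y ∈ uA := Or.inr (by simp)
      have hreachA : Reach G uA x y := by
        have h1 : Reach G uA x zxa := reach_adj hzxadj.symm hxuA (Or.inl hzxa)
        have h2 : Reach G {w | Reach G W a w} zxa zya :=
          ((hreachin a zxa hzxa).symm).trans (hreachin a zya hzya)
        have h3 : Reach G uA zya y := reach_adj hzyadj (Or.inl hzya) hyuA
        exact (h1.trans (h2.mono Set.subset_union_left)).trans h3
      set uB : Set V := {w | Reach G W b w} ∪ {x, y} with huBdef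
      have hxuB : x ∈ uB := Or.inr (by simp)
      have hyuB : y ∈ uB := Or.inr (by simp)
      have hreachB : Reach G uB x y := by
        have h1 : Reach G uB x zxb := reach_adj hzxbadj.symm hxuB (Or.inl hzxb)
        have h2 : Reach G {w | Reach G W b w} zxb zyb :=
          ((hreachin b zxb hzxb).symm).trans (hreachin b zyb hzyb)
        have h3 : Reach G uB zyb y := reach_adj hzybadj (Or.inl hzyb) hyuB
        exact (h1.trans (h2.mono Set.subset_union_left)).trans h3
      obtain ⟨m, p, hpchain, hm2, hpinj, hpadj⟩ := exists_min_chain hxy hnadjxy hreachA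
      obtain ⟨l, q, hqchain, hl2, hqinj, hqadj⟩ := exists_min_chain hxy hnadjxy hreachB
      have hpint : ∀ i, 1 ≤ i → i ≤ m - 1 → Reach G W a (p i) := by
        intro i h1 h2
        rcases hpchain.2.2.2 i (by omega) with h | h
        · exact h
        · exfalso
          simp only [Set.mem_insert_iff, Set.mem_singleton_iff] at h
          rcases h with h | h
          · exact hpinj i 0 (by omega) (by omega) (by omega) (h.trans hpchain.1.symm)
          · exact hpinj i m (by omega) le_rfl (by omega) (h.trans hpchain.2.1.symm)
      have hqint : ∀ j, 1 ≤ j → j ≤ l - 1 → Reach G W b (q j) := by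
        intro j h1 h2
        rcases hqchain.2.2.2 j (by omega) with h | h
        · exact h
        · exfalso
          simp only [Set.mem_insert_iff, Set.mem_singleton_iff] at h
          rcases h with h | h
          · exact hqinj j 0 (by omega) (by omega) (by omega) (h.trans hqchain.1.symm)
          · exact hqinj j l (by omega) le_rfl (by omega) (h.trans hqchain.2.1.symm)
      refine two_paths_false G hch x y m l p q hm2 hl2 hpchain.1 hpchain.2.1
        hqchain.1 hqchain.2.1 hpadj hqadj ?_ ?_ ?_
      · intro i j hi hj hpij
        by_contra hne'
        exact hpinj i j hi hj hne' hpij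
      · intro i j hi hj hqij
        by_contra hne'
        exact hqinj i j hi hj hne' hqij
      · intro i j h1 h2 h3 h4
        constructor
        · intro hadjpq
          exact hdisj (q j) (hstepR a (p i) (hpint i h1 h2) (q j) hadjpq
            (hqint j h3 h4).mem_right) (hqint j h3 h4)
        · intro heq
          exact hdisj (p i) (hpint i h1 h2) (heq ▸ hqint j h3 h4)
    have hside : ∀ (r o : V), r ∈ s → r ∉ T → o ∈ s → o ∉ T → ¬Reach G W r o →
        ∃ v, SimpIn G s v ∧ Reach G W r v := by
      intro r o hr hrT ho hoT hro
      set sR : Finset V := (s.filter (fun z => Reach G W r z)) ∪ T with hsRdef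
      have hrW : r ∈ W := (hWmem r).mpr ⟨hr, hrT⟩
      have hrsR : r ∈ sR :=
        Finset.mem_union_left _ (Finset.mem_filter.mpr ⟨hr, Reach.refl hrW⟩)
      have hsRs : sR ⊆ s := by
        intro z hz
        rcases Finset.mem_union.mp hz with h | h
        · exact (Finset.mem_filter.mp h).1
        · exact hTs h
      have hosR : o ∉ sR := by
        intro h
        rcases Finset.mem_union.mp h with h | h
        · exact hro (Finset.mem_filter.mp h).2
        · exact hoT h
      have hss : sR ⊂ s := ⟨hsRs, fun h => hosR (h ho)⟩
      have hcardlt : sR.card < n := hcard ▸ Finset.card_lt_card hss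
      obtain ⟨⟨v0, hv0⟩, keyR⟩ := IH sR.card hcardlt sR rfl ⟨r, hrsR⟩
      have hmemcomp : ∀ v, SimpIn G sR v → v ∉ T → Reach G W r v := by
        intro v hv hvT
        rcases Finset.mem_union.mp hv.1 with h | h
        · exact (Finset.mem_filter.mp h).2
        · exact absurd h hvT
      have hlift : ∀ v, SimpIn G sR v → Reach G W r v → SimpIn G s v := by
        intro v hv hvcomp
        refine ⟨hsRs hv.1, ?_⟩
        intro x₁ hx₁ y₁ hy₁ hvx hvy hxy₁
        have hmemsR : ∀ z ∈ s, G.Adj v z → z ∈ sR := by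
          intro z hz hadjz
          by_cases hzT : z ∈ T
          · exact Finset.mem_union_right _ hzT
          · exact Finset.mem_union_left _ (Finset.mem_filter.mpr ⟨hz,
              hstepR r v hvcomp z hadjz ((hWmem z).mpr ⟨hz, hzT⟩)⟩)
        exact hv.2 x₁ (hmemsR x₁ hx₁ hvx) y₁ (hmemsR y₁ hy₁ hvy) hvx hvy hxy₁
      by_cases hclq : ∀ u₁ ∈ sR, ∀ u₂ ∈ sR, u₁ ≠ u₂ → G.Adj u₁ u₂
      · refine ⟨r, hlift r ⟨hrsR, ?_⟩ (Reach.refl hrW), Reach.refl hrW⟩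
        intro x₁ hx₁ y₁ hy₁ _ _ h
        exact hclq x₁ hx₁ y₁ hy₁ h
      · push_neg at hclq
        obtain ⟨u₁, hu₁, u₂, hu₂, hne12, hnadj12⟩ := hclq
        obtain ⟨v, w, hv, hw, hvw, hnadjvw⟩ := keyR u₁ hu₁ u₂ hu₂ hne12 hnadj12
        by_cases hvT : v ∈ T
        · by_cases hwT : w ∈ T
          · exact absurd (hTclq v hvT w hwT hvw) hnadjvw
          · exact ⟨w, hlift w hw (hmemcomp w hw hwT), hmemcomp w hw hwT⟩
        · exact ⟨v, hlift v hv (hmemcomp v hv hvT), hmemcomp v hv hvT⟩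
    obtain ⟨vA, hvA, hvAr⟩ := hside a b ha haT hb hbT hnreach
    obtain ⟨vB, hvB, hvBr⟩ := hside b a hb hbT ha haT (fun h => hnreach h.symm)
    refine ⟨vA, vB, hvA, hvB, ?_, ?_⟩
    · intro h
      apply hnreach
      have h2 : Reach G W b vA := by rw [h]; exact hvBr
      exact hvAr.trans h2.symm
    · intro hadjAB
      have h3 : Reach G W a vB := hstepR a vA hvAr vB hadjAB hvBr.mem_right
      exact hnreach (h3.trans hvBr.symm)
  refine ⟨?_, key⟩
  by_cases hclq : ∀ x ∈ s, ∀ y ∈ s, x ≠ y → G.Adj x y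
  · obtain ⟨v, hv⟩ := hne
    exact ⟨v, hv, fun x hx y hy hvx hvy hxy => hclq x hx y hy hxy⟩
  · push_neg at hclq
    obtain ⟨x, hx, y, hy, hxy, hnadjxy⟩ := hclq
    obtain ⟨v, w, hv, _, _, _⟩ := key x hx y hy hxy hnadjxy
    exact ⟨v, hv⟩

end GR19

namespace GR19

set_option linter.unusedSectionVars false
set_option maxHeartbeats 1000000

/-- Vertex connectivity is at most the minimum degree, for finite graphs. -/
lemma vertexConn_le_minDeg {X : Type*} [Finite X] (Γ : SimpleGraph X) :
    vertexConn Γ ≤ minDeg Γ := by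
  classical
  cases isEmpty_or_nonempty X with
  | inl h =>
    have h0 : vertexConn Γ ≤ 0 := by
      apply Nat.sInf_le
      refine ⟨∅, by simp, Or.inr ?_⟩
      rw [Set.compl_empty, Set.ncard_univ, Nat.card_of_isEmpty]
      omega
    omega
  | inr h =>
    have hne : {k : ℕ | ∃ v, (Γ.neighborSet v).ncard = k}.Nonempty :=
      ⟨_, Classical.arbitrary X, rfl⟩
    obtain ⟨v₀, hv₀⟩ := Nat.sInf_mem hne
    apply Nat.sInf_le
    refine ⟨Γ.neighborSet v₀, hv₀, ?_⟩
    by_cases hcard : ((Γ.neighborSet v₀)ᶜ : Set X).ncard ≤ 1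
    · exact Or.inr hcard
    · left
      intro hconn
      have hv₀mem : v₀ ∈ (Γ.neighborSet v₀)ᶜ := fun h' => Γ.irrefl h'
      obtain ⟨u, hu, huv⟩ := Set.exists_ne_of_one_lt_ncard (s := ((Γ.neighborSet v₀)ᶜ : Set X)) (by omega) v₀
      have hreach := hconn.preconnected ⟨v₀, hv₀mem⟩ ⟨u, hu⟩
      obtain ⟨w⟩ := hreach
      cases w with
      | nil => exact huv rfl
      | cons hadj p =>
        rename_i b'
        have hb : Γ.Adj v₀ ↑b' := hadj
        exact b'.2 hb

section Main

variable {V : Type*} [Fintype V] [DecidableEq V] (G : SimpleGraph V)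

/-- The minimum degree of any subgraph is less than the clique number. -/
lemma minDeg_lt_cliqueNum [Nonempty V]
    (hDirac : ∀ s : Finset V, s.Nonempty → ∃ v, SimpIn G s v)
    (H : G.Subgraph) : minDeg H.coe + 1 ≤ G.cliqueNum := by
  classical
  have hω1 : 1 ≤ G.cliqueNum := by
    have hclq : G.IsClique (↑({Classical.arbitrary V} : Finset V) : Set V) := by
      simp [SimpleGraph.isClique_iff, Set.pairwise_singleton]
    have := SimpleGraph.IsClique.card_le_cliqueNum (G := G) (tc := hclq)
    simpa using this
  rcases Set.eq_empty_or_nonempty H.verts with hverts | hverts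
  · -- empty vertex set: minDeg is sInf of the empty set, i.e. 0
    have : {k : ℕ | ∃ v : ↥H.verts, (H.coe.neighborSet v).ncard = k} = ∅ := by
      ext k
      simp only [Set.mem_setOf_eq, Set.mem_empty_iff_false, iff_false, not_exists]
      intro v
      have hv2 := v.2
      simp only [hverts] at hv2
      exact (Set.notMem_empty _ hv2).elim
    rw [minDeg, this, Nat.sInf_empty]
    omega
  · obtain ⟨v, hv⟩ := hverts
    set s : Finset V := Set.toFinset H.verts with hsdef
    have hsne : s.Nonempty := ⟨v, Set.mem_toFinset.mpr hv⟩
    obtain ⟨w, hws, hwsimp⟩ := hDirac s hsne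
    have hwverts : w ∈ H.verts := Set.mem_toFinset.mp hws
    -- the closed neighborhood of w in s is a clique
    set Nw : Finset V := s.filter (fun z => G.Adj w z) with hNwdef
    have hclq : G.IsClique (↑(insert w Nw) : Set V) := by
      intro x hx y hy hxy
      simp only [Finset.coe_insert, Set.mem_insert_iff, Finset.mem_coe, hNwdef,
        Finset.mem_filter] at hx hy
      rcases hx with rfl | ⟨hxs, hxadj⟩
      · rcases hy with rfl | ⟨hys, hyadj⟩
        · exact absurd rfl hxy
        · exact hyadj
      · rcases hy with rfl | ⟨hys, hyadj⟩
        · exact hxadj.symm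
        · exact hwsimp x hxs y hys hxadj hyadj hxy
    have hcardle : (insert w Nw).card ≤ G.cliqueNum :=
      SimpleGraph.IsClique.card_le_cliqueNum (G := G) (tc := hclq)
    have hwNw : w ∉ Nw := fun h => G.irrefl ((Finset.mem_filter.mp h).2)
    have hNwcard : Nw.card + 1 ≤ G.cliqueNum := by
      rwa [Finset.card_insert_of_notMem hwNw] at hcardle
    -- the degree of w in H.coe is at most Nw.card
    have hdeg : (H.coe.neighborSet ⟨w, hwverts⟩).ncard ≤ Nw.card := by
      have hsub : (Subtype.val '' (H.coe.neighborSet ⟨w, hwverts⟩)) ⊆ ↑Nw := by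
        rintro z ⟨z', hz', rfl⟩
        have hadj : H.Adj w ↑z' := hz'
        refine Finset.mem_coe.mpr (Finset.mem_filter.mpr ⟨?_, hadj.adj_sub⟩)
        exact Set.mem_toFinset.mpr z'.2
      calc (H.coe.neighborSet ⟨w, hwverts⟩).ncard
          = (Subtype.val '' (H.coe.neighborSet ⟨w, hwverts⟩)).ncard :=
            (Set.ncard_image_of_injective _ Subtype.val_injective).symm
        _ ≤ (↑Nw : Set V).ncard := Set.ncard_le_ncard hsub (Finset.finite_toSet Nw)
        _ = Nw.card := Set.ncard_coe_finset Nw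
    have hminle : minDeg H.coe ≤ (H.coe.neighborSet ⟨w, hwverts⟩).ncard :=
      Nat.sInf_le ⟨⟨w, hwverts⟩, rfl⟩
    omega

/-- The complete subgraph on a maximum clique. -/
def cliqueSubgraph (K : Finset V) (hK : G.IsClique (↑K : Set V)) : G.Subgraph where
  verts := ↑K
  Adj x y := G.Adj x y ∧ x ∈ K ∧ y ∈ K
  adj_sub h := h.1
  edge_vert h := h.2.1
  symm := ⟨fun x y ⟨h1, h2, h3⟩ => ⟨h1.symm, h3, h2⟩⟩

lemma cliqueSubgraph_minDeg (K : Finset V) (hK : G.IsClique (↑K : Set V))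
    (hKne : K.Nonempty) : minDeg (cliqueSubgraph G K hK).coe = K.card - 1 := by
  classical
  have hnbr : ∀ v : ↥(cliqueSubgraph G K hK).verts,
      (cliqueSubgraph G K hK).coe.neighborSet v = {v}ᶜ := by
    intro v
    ext w
    simp only [SimpleGraph.mem_neighborSet, Set.mem_compl_iff, Set.mem_singleton_iff]
    constructor
    · intro hadj h
      subst h
      exact G.irrefl hadj.1
    · intro hne
      have hvw : (v : V) ≠ (w : V) := fun h => hne (Subtype.ext h).symm
      exact ⟨hK v.2 w.2 hvw, v.2, w.2⟩
  have hcardX : Nat.card ↥(cliqueSubgraph G K hK).verts = K.card := by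
    simp only [cliqueSubgraph]
    rw [Nat.card_coe_set_eq, Set.ncard_coe_finset]
  have hval : ∀ v : ↥(cliqueSubgraph G K hK).verts,
      ((cliqueSubgraph G K hK).coe.neighborSet v).ncard = K.card - 1 := by
    intro v
    rw [hnbr v]
    have h1 := Set.ncard_add_ncard_compl ({v} : Set ↥(cliqueSubgraph G K hK).verts)
      (Set.toFinite _)
    rw [Set.ncard_singleton, hcardX] at h1
    omega
  have hset : {k : ℕ | ∃ v : ↥(cliqueSubgraph G K hK).verts,
      ((cliqueSubgraph G K hK).coe.neighborSet v).ncard = k} = {K.card - 1} := by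
    obtain ⟨v₀, hv₀⟩ := hKne
    ext k
    simp only [Set.mem_setOf_eq, Set.mem_singleton_iff]
    constructor
    · rintro ⟨v, rfl⟩
      exact hval v
    · rintro rfl
      exact ⟨⟨v₀, hv₀⟩, hval _⟩
  rw [minDeg, hset, csInf_singleton]

lemma cliqueSubgraph_vertexConn (K : Finset V) (hK : G.IsClique (↑K : Set V))
    (hKne : K.Nonempty) : vertexConn (cliqueSubgraph G K hK).coe = K.card - 1 := by
  classical
  set X := ↥(cliqueSubgraph G K hK).verts with hXdef
  have hcardX : Nat.card X = K.card := by
    rw [hXdef]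
    simp only [cliqueSubgraph]
    rw [Nat.card_coe_set_eq, Set.ncard_coe_finset]
  obtain ⟨v₀, hv₀⟩ := hKne
  set v : X := ⟨v₀, hv₀⟩ with hvdef
  have hadjX : ∀ x y : X, x ≠ y → (cliqueSubgraph G K hK).coe.Adj x y := by
    intro x y hxy
    have hvw : (x : V) ≠ (y : V) := fun h => hxy (Subtype.ext h)
    exact ⟨hK x.2 y.2 hvw, x.2, y.2⟩
  apply le_antisymm
  · -- delete everything except one vertex
    apply Nat.sInf_le
    refine ⟨({v} : Set X)ᶜ, ?_, Or.inr ?_⟩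
    · have h1 := Set.ncard_add_ncard_compl ({v} : Set X) (Set.toFinite _)
      rw [Set.ncard_singleton, hcardX] at h1
      omega
    · rw [compl_compl, Set.ncard_singleton]
  · -- any smaller deletion leaves a connected graph on ≥ 2 vertices
    have hwit : (({v} : Set X)ᶜ).ncard ∈ {k : ℕ | ∃ S : Set X, S.ncard = k ∧
        (¬ ((cliqueSubgraph G K hK).coe.induce Sᶜ).Connected ∨ (Sᶜ : Set X).ncard ≤ 1)} :=
      ⟨({v} : Set X)ᶜ, rfl, Or.inr (by rw [compl_compl, Set.ncard_singleton])⟩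
    apply le_csInf ⟨_, hwit⟩
    rintro k ⟨S, hScard, hdisc⟩
    by_contra hlt
    push_neg at hlt
    have h1 := Set.ncard_add_ncard_compl S (Set.toFinite _)
    rw [hScard, hcardX] at h1
    have h2 : 2 ≤ (Sᶜ : Set X).ncard := by omega
    rcases hdisc with hdisc | hdisc
    · apply hdisc
      have hScne : (Sᶜ : Set X).Nonempty := by
        have hpos : 0 < (Sᶜ : Set X).ncard := by omega
        exact (Set.ncard_pos (Set.toFinite _)).mp hpos
      obtain ⟨x₀, hx₀⟩ := hScne
      have hnonempty : Nonempty ↥(Sᶜ : Set X) := ⟨⟨x₀, hx₀⟩⟩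
      rw [SimpleGraph.connected_iff]
      refine ⟨fun x y => ?_, hnonempty⟩
      by_cases hxy : x = y
      · rw [hxy]
      · have hadj2 : ((cliqueSubgraph G K hK).coe.induce Sᶜ).Adj x y := by
          have hne2 : (↑x : X) ≠ ↑y := fun h => hxy (Subtype.ext h)
          exact hadjX ↑x ↑y hne2
        exact hadj2.reachable
    · omega

end Main
end GR19

open Matrix MeasureTheory
open GR19

set_option maxHeartbeats 1000000

/-- For a finite simple chordal graph `G` (no induced cycle of length four
or more), `κ*(G) + 1 = δ*(G) + 1 = ω(G)`, and consequently `r(G) = ω(G)`. -/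
theorem gaussianRank_of_chordal {V : Type*} [Fintype V] [DecidableEq V] [Nonempty V]
    (G : SimpleGraph V)
    (hchordal : ∀ n : ℕ, 4 ≤ n → ∀ s : Set V,
      IsEmpty (G.induce s ≃g SimpleGraph.cycleGraph n)) :
    subgraphConn G + 1 = G.cliqueNum ∧ degeneracy G + 1 = G.cliqueNum ∧
      gaussianRank G = G.cliqueNum := by
  classical
  have hch := chordal_no_cycle G hchordal
  have hDiracAll := dirac G hch
  have hDirac : ∀ s : Finset V, s.Nonempty → ∃ v, SimpIn G s v :=
    fun s hs => (hDiracAll s.card s rfl hs).1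
  obtain ⟨K, hKclq⟩ := G.exists_isNClique_cliqueNum
  have hKc : G.IsClique (↑K : Set V) := hKclq.1
  have hKcard : K.card = G.cliqueNum := hKclq.2
  have hω1 : 1 ≤ G.cliqueNum := by
    have hclq : G.IsClique (↑({Classical.arbitrary V} : Finset V) : Set V) := by
      simp [SimpleGraph.isClique_iff, Set.pairwise_singleton]
    have := SimpleGraph.IsClique.card_le_cliqueNum (G := G) (tc := hclq)
    simpa using this
  have hKne : K.Nonempty := by
    rw [← Finset.card_pos, hKcard]; omega
  have hminle : ∀ H : G.Subgraph, minDeg H.coe + 1 ≤ G.cliqueNum :=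
    minDeg_lt_cliqueNum G hDirac
  have hvcle : ∀ H : G.Subgraph, vertexConn H.coe + 1 ≤ G.cliqueNum := by
    intro H
    have h1 := vertexConn_le_minDeg H.coe
    have h2 := hminle H
    omega
  have hKminDeg : minDeg (cliqueSubgraph G K hKc).coe = G.cliqueNum - 1 := by
    rw [cliqueSubgraph_minDeg G K hKc hKne, hKcard]
  have hKvc : vertexConn (cliqueSubgraph G K hKc).coe = G.cliqueNum - 1 := by
    rw [cliqueSubgraph_vertexConn G K hKc hKne, hKcard]
  have hdegen : degeneracy G = G.cliqueNum - 1 := by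
    apply le_antisymm
    · have hwm : minDeg ((⊥ : G.Subgraph)).coe ∈
          {k : ℕ | ∃ H : G.Subgraph, minDeg H.coe = k} := ⟨⊥, rfl⟩
      apply csSup_le ⟨_, hwm⟩
      rintro k ⟨H, rfl⟩
      have := hminle H; omega
    · apply le_csSup
      · refine ⟨G.cliqueNum - 1, ?_⟩
        rintro k ⟨H, rfl⟩
        have := hminle H; omega
      · exact ⟨cliqueSubgraph G K hKc, hKminDeg⟩
  have hsub : subgraphConn G = G.cliqueNum - 1 := by
    apply le_antisymm
    · have hwm : vertexConn ((⊥ : G.Subgraph)).coe ∈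
          {k : ℕ | ∃ H : G.Subgraph, vertexConn H.coe = k} := ⟨⊥, rfl⟩
      apply csSup_le ⟨_, hwm⟩
      rintro k ⟨H, rfl⟩
      have := hvcle H; omega
    · apply le_csSup
      · refine ⟨G.cliqueNum - 1, ?_⟩
        rintro k ⟨H, rfl⟩
        have := hvcle H; omega
      · exact ⟨cliqueSubgraph G K hKc, hKvc⟩
  have hgr : GRankProp G G.cliqueNum := by
    intro A hA
    have hAs := hermitian_entries hA.1.1
    have hAcl : ∀ Kc : Finset V, G.IsClique (↑Kc : Set V) → PDOn A ↑Kc := by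
      intro Kc hKcc
      exact PDOn_of_inGenPos hA Kc
        (SimpleGraph.IsClique.card_le_cliqueNum (G := G) (tc := hKcc))
    obtain ⟨P, hPpd, hPdiag, hPedge⟩ := completion_aux G hDirac A hAs hAcl Finset.univ
    exact ⟨P, hPpd, fun i => hPdiag i (Finset.mem_univ i),
      fun i j hij => hPedge i (Finset.mem_univ i) j (Finset.mem_univ j) hij⟩
  have hglow : ∀ m ∈ {r : ℕ | 0 < r ∧ GRankProp G r}, G.cliqueNum ≤ m := by
    rintro m ⟨hm0, hmg⟩
    by_contra hlt
    push_neg at hlt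
    exact not_grankProp_of_clique G K hKc (by omega) hmg
  have hgrank : gaussianRank G = G.cliqueNum :=
    le_antisymm (Nat.sInf_le ⟨by omega, hgr⟩) (le_csInf ⟨_, by omega, hgr⟩ hglow)
  exact ⟨by omega, by omega, hgrank⟩
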